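/- Let A ∈ L²(Ω_1) ⊗ ⋯ ⊗ L²(Ω_d) and suppose that for each j the mode-j range of A equals the span of orthonormal functions u_{j,1},…,u_{j,r_j} in L²(Ω_j). Then A(z_1,…,z_d) = Σ_{ρ_1=1}^{r_1} ⋯ Σ_{ρ_d=1}^{r_d} A[u_{1,ρ_1},…,u_{d,ρ_d}] · u_{1,ρ_1}(z_1) ⋯ u_{d,ρ_d}(z_d). In particular, A is determined by a core tensor of size Π_j r_j. -/

import Mathlib

open MeasureTheory
open scoped RealInnerProductSpace

set_option linter.unusedSectionVars false

section
open Set Function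
variable {d : ℕ} {Ω : Fin d → Type*} [∀ j, MeasurableSpace (Ω j)]
  (μ : ∀ j, Measure (Ω j)) [∀ j, SigmaFinite (μ j)]

lemma qmp_eval (j : Fin d) :
    Measure.QuasiMeasurePreserving (fun z : ∀ j, Ω j => z j) (Measure.pi μ) (μ j) := by
  refine ⟨measurable_pi_apply j, Measure.AbsolutelyContinuous.mk fun s hs h0 => ?_⟩
  rw [Measure.map_apply (measurable_pi_apply j) hs]
  exact Measure.pi_eval_preimage_null μ h0

lemma ae_comp_eval {j : Fin d} {f g : Ω j → ℝ} (h : f =ᵐ[μ j] g) :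
    (fun z : ∀ j, Ω j => f (z j)) =ᵐ[Measure.pi μ] fun z => g (z j) :=
  Measure.tendsto_eval_ae_ae.eventually h

lemma memLp_prod (w : ∀ j, Lp ℝ 2 (μ j)) :
    MemLp (fun z : ∀ j, Ω j => ∏ j, (w j : Ω j → ℝ) (z j)) 2 (Measure.pi μ) := by
  letI : ∀ j, MeasureSpace (Ω j) := fun j => ⟨μ j⟩
  have hmeas : ∀ j : Fin d, AEStronglyMeasurable
      (fun z : ∀ j, Ω j => (w j : Ω j → ℝ) (z j)) (Measure.pi μ) := fun j =>
    (Lp.aestronglyMeasurable (w j)).comp_quasiMeasurePreserving (qmp_eval μ j)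
  have hsm : AEStronglyMeasurable (fun z : ∀ j, Ω j => ∏ j, (w j : Ω j → ℝ) (z j))
      (Measure.pi μ) := Finset.aestronglyMeasurable_fun_prod _ fun j _ => hmeas j
  rw [memLp_two_iff_integrable_sq hsm]
  have h1 : (fun z : ∀ j, Ω j => (∏ j, (w j : Ω j → ℝ) (z j)) ^ 2)
      = fun z => ∏ j, ((w j : Ω j → ℝ) (z j)) ^ 2 := by
    funext z; rw [← Finset.prod_pow]
  rw [h1]
  have h2 : ∀ j, Integrable (fun x : Ω j => ((w j : Ω j → ℝ) x) ^ 2) (μ j) := fun j =>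
    (memLp_two_iff_integrable_sq (Lp.aestronglyMeasurable (w j))).1 (Lp.memLp (w j))
  exact MeasureTheory.Integrable.fintype_prod_dep h2

end
section
open Set Function
variable {d : ℕ} {Ω : Fin d → Type*} [∀ j, MeasurableSpace (Ω j)]
  (μ : ∀ j, Measure (Ω j)) [∀ j, SigmaFinite (μ j)]

noncomputable def P (w : ∀ j, Lp ℝ 2 (μ j)) : Lp ℝ 2 (Measure.pi μ) :=
  (memLp_prod μ w).toLp _

lemma coeFn_P (w : ∀ j, Lp ℝ 2 (μ j)) :
    ⇑(P μ w) =ᵐ[Measure.pi μ] fun z => ∏ j, (w j : Ω j → ℝ) (z j) :=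
  (memLp_prod μ w).coeFn_toLp

lemma prod_update_apply [inst : DecidableEq (Fin d)] (w : ∀ j, Lp ℝ 2 (μ j)) (i : Fin d)
    (v : Lp ℝ 2 (μ i)) (z : ∀ j, Ω j) :
    ∏ j, (Function.update w i v j : Ω j → ℝ) (z j)
      = (v : Ω i → ℝ) (z i) * ∏ j ∈ (Finset.univ \ {i}), (w j : Ω j → ℝ) (z j) := by
  have h : ∀ j, (Function.update w i v j : Ω j → ℝ) (z j)
      = Function.update (fun k => (w k : Ω k → ℝ) (z k)) i ((v : Ω i → ℝ) (z i)) j :=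
    fun j => Function.apply_update (fun k (g : Lp ℝ 2 (μ k)) => (g : Ω k → ℝ) (z k)) w i v j
  simp_rw [h]
  exact Finset.prod_update_of_mem (Finset.mem_univ i) _ _

noncomputable def M : MultilinearMap ℝ (fun j => Lp ℝ 2 (μ j)) (Lp ℝ 2 (Measure.pi μ)) where
  toFun := P μ
  map_update_add' := by
    intro inst w i x y
    have hi : inst = instDecidableEqFin d := Subsingleton.elim _ _
    subst hi
    apply Lp.ext
    have hxy : (fun z : ∀ j, Ω j => ((x + y : Lp ℝ 2 (μ i)) : Ω i → ℝ) (z i))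
        =ᵐ[Measure.pi μ] fun z => (x : Ω i → ℝ) (z i) + (y : Ω i → ℝ) (z i) :=
      ae_comp_eval μ (Lp.coeFn_add x y)
    filter_upwards [coeFn_P μ (Function.update w i (x + y)),
      coeFn_P μ (Function.update w i x), coeFn_P μ (Function.update w i y),
      Lp.coeFn_add (P μ (Function.update w i x)) (P μ (Function.update w i y)), hxy]
      with z h1 h2 h3 h4 h5
    rw [h1, h4, Pi.add_apply, h2, h3, prod_update_apply, prod_update_apply,
      prod_update_apply, h5, add_mul]
  map_update_smul' := by
    intro inst w i c x
    have hi : inst = instDecidableEqFin d := Subsingleton.elim _ _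
    subst hi
    apply Lp.ext
    have hcx : (fun z : ∀ j, Ω j => ((c • x : Lp ℝ 2 (μ i)) : Ω i → ℝ) (z i))
        =ᵐ[Measure.pi μ] fun z => c * (x : Ω i → ℝ) (z i) :=
      ae_comp_eval μ ((Lp.coeFn_smul c x).trans (Filter.Eventually.of_forall fun a => rfl))
    filter_upwards [coeFn_P μ (Function.update w i (c • x)),
      coeFn_P μ (Function.update w i x),
      Lp.coeFn_smul c (P μ (Function.update w i x)), hcx]
      with z h1 h2 h3 h4
    rw [h1, h3, Pi.smul_apply, h2, prod_update_apply, prod_update_apply, h4,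
      smul_eq_mul, mul_assoc]
end
section
open Set Function
variable {d : ℕ} {Ω : Fin d → Type*} [∀ j, MeasurableSpace (Ω j)]
  (μ : ∀ j, Measure (Ω j)) [∀ j, SigmaFinite (μ j)]

noncomputable def T (f : Lp ℝ 2 (Measure.pi μ)) :
    MultilinearMap ℝ (fun j => Lp ℝ 2 (μ j)) ℝ :=
  ((innerSL ℝ f).toLinearMap).compMultilinearMap (M μ)

lemma T_eq_inner (f : Lp ℝ 2 (Measure.pi μ)) (w : ∀ j, Lp ℝ 2 (μ j)) :
    T μ f w = ⟪f, P μ w⟫ := rfl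

lemma T_apply (f : Lp ℝ 2 (Measure.pi μ)) (w : ∀ j, Lp ℝ 2 (μ j)) :
    T μ f w = ∫ z, f z * ∏ j, (w j : Ω j → ℝ) (z j) ∂(Measure.pi μ) := by
  rw [T_eq_inner, L2.inner_def]
  refine integral_congr_ae ?_
  filter_upwards [coeFn_P μ w] with z hz
  rw [hz]
  simp [RCLike.inner_apply]
  ring

lemma inner_P_P (w w' : ∀ j, Lp ℝ 2 (μ j)) :
    ⟪P μ w, P μ w'⟫ = ∏ j, ⟪w j, w' j⟫ := by
  letI : ∀ j, MeasureSpace (Ω j) := fun j => ⟨μ j⟩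
  rw [L2.inner_def]
  have h1 : ∫ z, ⟪(P μ w) z, (P μ w') z⟫ ∂(Measure.pi μ)
      = ∫ z : ∀ j, Ω j, ∏ j, ((w j : Ω j → ℝ) (z j) * (w' j : Ω j → ℝ) (z j)) ∂(Measure.pi μ) := by
    refine integral_congr_ae ?_
    filter_upwards [coeFn_P μ w, coeFn_P μ w'] with z h1 h2
    rw [h1, h2]
    simp [RCLike.inner_apply, Finset.prod_mul_distrib]
    ring
  rw [h1]
  have h2 : ∫ z : ∀ j, Ω j, ∏ j, ((w j : Ω j → ℝ) (z j) * (w' j : Ω j → ℝ) (z j)) ∂(Measure.pi μ)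
      = ∏ j, ∫ x : Ω j, (w j : Ω j → ℝ) x * (w' j : Ω j → ℝ) x ∂(μ j) :=
    MeasureTheory.integral_fintype_prod_eq_prod (ι := Fin d)
      (fun j (x : Ω j) => (w j : Ω j → ℝ) x * (w' j : Ω j → ℝ) x)
  rw [h2]
  refine Finset.prod_congr rfl fun j _ => ?_
  rw [L2.inner_def]
  refine (integral_congr_ae ?_).symm
  filter_upwards with x
  simp [RCLike.inner_apply]
  ring
end
section
open Set Function Filter
open scoped ENNReal
variable {d : ℕ} {Ω : Fin d → Type*} [∀ j, MeasurableSpace (Ω j)]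
  (μ : ∀ j, Measure (Ω j)) [∀ j, SigmaFinite (μ j)]

lemma eq_zero_of_inner_P (B : Lp ℝ 2 (Measure.pi μ))
    (hB : ∀ w : ∀ j, Lp ℝ 2 (μ j), ⟪B, P μ w⟫ = 0) : B = 0 := by
  -- integrability on finite-measure sets
  have hInt : ∀ t : Set (∀ j, Ω j), MeasurableSet t → Measure.pi μ t < ∞ →
      IntegrableOn (⇑B) t (Measure.pi μ) := by
    intro t ht hfin
    haveI := Fact.mk hfin
    exact ((Lp.memLp B).restrict t).integrable one_le_two
  -- rectangles with finite sides
  have hrect : ∀ s : ∀ j, Set (Ω j), (∀ j, MeasurableSet (s j)) → (∀ j, μ j (s j) < ∞) →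
      ∫ z in univ.pi s, B z ∂(Measure.pi μ) = 0 := by
    intro s hs hfin
    set w : ∀ j, Lp ℝ 2 (μ j) := fun j => indicatorConstLp 2 (hs j) (hfin j).ne (1 : ℝ) with hw
    have hae : ∀ᵐ z ∂(Measure.pi μ), ∀ j, (w j : Ω j → ℝ) (z j)
        = (s j).indicator (fun _ => (1:ℝ)) (z j) :=
      ae_all_iff.2 fun j => ae_comp_eval μ indicatorConstLp_coeFn
    have key : ∀ z : ∀ j, Ω j, (∏ j, (s j).indicator (fun _ => (1:ℝ)) (z j))
        = (univ.pi s).indicator (fun _ => (1:ℝ)) z := by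
      intro z
      by_cases h : z ∈ univ.pi s
      · rw [Set.indicator_of_mem h]
        exact Finset.prod_eq_one fun j _ => Set.indicator_of_mem (h j (mem_univ j)) _
      · rw [Set.indicator_of_notMem h]
        have hex : ∃ j, z j ∉ s j := by
          by_contra hc
          push_neg at hc
          exact h fun j _ => hc j
        obtain ⟨j, hj⟩ := hex
        exact Finset.prod_eq_zero (Finset.mem_univ j) (Set.indicator_of_notMem hj _)
    have h0 : (∫ z, B z * ∏ j, (w j : Ω j → ℝ) (z j) ∂(Measure.pi μ)) = 0 :=
      (T_apply μ B w).symm.trans (hB w)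
    rw [← h0, ← integral_indicator (MeasurableSet.univ_pi hs)]
    refine integral_congr_ae ?_
    filter_upwards [hae] with z hz
    have : ∏ j, (w j : Ω j → ℝ) (z j) = (univ.pi s).indicator (fun _ => (1:ℝ)) z := by
      rw [Finset.prod_congr rfl fun j _ => hz j, key]
    rw [this]
    by_cases h : z ∈ univ.pi s
    · rw [Set.indicator_of_mem h, Set.indicator_of_mem h, mul_one]
    · rw [Set.indicator_of_notMem h, Set.indicator_of_notMem h, mul_zero]
  -- spanning rectangles
  set R : ℕ → Set (∀ j, Ω j) := fun n => univ.pi fun j => spanningSets (μ j) n with hR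
  have hRmeas : ∀ n, MeasurableSet (R n) :=
    fun n => MeasurableSet.univ_pi fun j => measurableSet_spanningSets (μ j) n
  have hRfin : ∀ n, Measure.pi μ (R n) < ∞ := by
    intro n
    rw [hR]
    rw [Measure.pi_pi]
    exact ENNReal.prod_lt_top fun j _ => measure_spanningSets_lt_top (μ j) n
  have hRzero : ∀ n, ∫ z in R n, B z ∂(Measure.pi μ) = 0 := fun n =>
    hrect _ (fun j => measurableSet_spanningSets (μ j) n)
      (fun j => measure_spanningSets_lt_top (μ j) n)
  -- π-λ argument
  have key : ∀ ⦃t : Set (∀ j, Ω j)⦄, MeasurableSet t →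
      ∀ n, ∫ z in t ∩ R n, B z ∂(Measure.pi μ) = 0 := by
    refine MeasurableSpace.induction_on_inter generateFrom_pi.symm isPiSystem_pi (by simp) ?_ ?_ ?_
    · rintro t' ⟨s, hs, rfl⟩ n
      rw [hR, ← Set.pi_inter_distrib]
      exact hrect _ (fun j => (hs j (mem_univ j)).inter (measurableSet_spanningSets (μ j) n))
        (fun j => ((measure_mono inter_subset_right).trans_lt
          (measure_spanningSets_lt_top (μ j) n)))
    · intro t' ht' hC n
      have hadd := integral_inter_add_diff (μ := Measure.pi μ) (f := ⇑B) (s := R n) (t := t')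
        ht' (hInt (R n) (hRmeas n) (hRfin n))
      have h1 : R n ∩ t' = t' ∩ R n := inter_comm _ _
      have h2 : R n \ t' = t'ᶜ ∩ R n := by rw [diff_eq, inter_comm]
      rw [h1, h2, hC n, hRzero n, zero_add] at hadd
      exact hadd
    · intro f hdisj hmeas hC n
      rw [iUnion_inter]
      rw [integral_iUnion (fun i => (hmeas i).inter (hRmeas n))
        (hdisj.mono fun i j h => h.mono inter_subset_left inter_subset_left)
        ((hInt (R n) (hRmeas n) (hRfin n)).mono_set (by
          exact iUnion_subset fun i => inter_subset_right))]
      simp [hC _ n]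
  -- union of R n is everything
  have hRU : ⋃ n, R n = univ := by
    ext z
    simp only [mem_iUnion, mem_univ, iff_true, hR, Set.mem_pi, mem_univ, true_implies]
    have : ∀ j, ∃ n, z j ∈ spanningSets (μ j) n := by
      intro j
      have := iUnion_spanningSets (μ j)
      have hz : z j ∈ ⋃ n, spanningSets (μ j) n := this ▸ mem_univ _
      exact mem_iUnion.1 hz
    choose g hg using this
    refine ⟨Finset.univ.sup g, fun j => monotone_spanningSets (μ j) ?_ (hg j)⟩
    exact Finset.le_sup (Finset.mem_univ j)
  -- all finite-measure sets
  have hfinal : ∀ t : Set (∀ j, Ω j), MeasurableSet t → Measure.pi μ t < ∞ →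
      ∫ z in t, B z ∂(Measure.pi μ) = 0 := by
    intro t ht hfin
    have hmono : Monotone fun n => t ∩ R n := fun a b hab =>
      inter_subset_inter_right _ (fun z hz => by
        rw [hR] at hz ⊢
        exact fun j hj => monotone_spanningSets (μ j) hab (hz j hj))
    have hcup : ⋃ n, (t ∩ R n) = t := by rw [← inter_iUnion, hRU, inter_univ]
    have htend := tendsto_setIntegral_of_monotone (μ := Measure.pi μ) (f := ⇑B)
      (fun n => ht.inter (hRmeas n)) hmono (by rw [hcup]; exact hInt t ht hfin)
    rw [hcup] at htend
    have htend0 : Tendsto (fun n => ∫ z in t ∩ R n, B z ∂(Measure.pi μ)) atTop (nhds 0) := by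
      simp only [key ht]
      exact tendsto_const_nhds
    exact (tendsto_nhds_unique htend htend0)
  rw [Lp.eq_zero_iff_ae_eq_zero]
  exact ae_eq_zero_of_forall_setIntegral_eq_of_sigmaFinite hInt hfinal
end

/-- **Core-tensor representation of a function with finite mode ranges.**
Let `A ∈ L²(Ω_1) ⊗ ⋯ ⊗ L²(Ω_d)` and suppose for each `j` the mode-`j` range of
`A` equals the span of orthonormal functions `u_{j,1},…,u_{j,r_j}` in `L²(Ω_j)`;
in particular `A` vanishes on the orthogonal complement of
`range_1(A) ⊗ ⋯ ⊗ range_d(A)` (hypothesis `hrange`: the contraction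
`A[w_1,…,w_d]` is zero whenever some `w_j` is orthogonal to all `u_{j,ρ}`).
Then `A = Σ_{ρ_1,…,ρ_d} A[u_{1,ρ_1},…,u_{d,ρ_d}] · u_{1,ρ_1} ⊗ ⋯ ⊗ u_{d,ρ_d}`,
so `A` is determined by a core tensor of size `Π_j r_j`. -/
theorem core_representation_of_finite_rank
    {d : ℕ} {Ω : Fin d → Type*} [∀ j, MeasurableSpace (Ω j)]
    (μ : ∀ j, Measure (Ω j)) [∀ j, SigmaFinite (μ j)]
    (r : Fin d → ℕ)
    (u : ∀ j, Fin (r j) → Lp ℝ 2 (μ j)) (hON : ∀ j, Orthonormal ℝ (u j))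
    (A : Lp ℝ 2 (Measure.pi μ))
    (hrange : ∀ (j : Fin d) (v : Lp ℝ 2 (μ j)),
      (∀ ρ, ⟪u j ρ, v⟫ = 0) →
        ∀ w : ∀ j', Lp ℝ 2 (μ j'), w j = v →
          (∫ z, A z * ∏ j', (w j' : Ω j' → ℝ) (z j') ∂(Measure.pi μ)) = 0)
    (U : (∀ j, Fin (r j)) → Lp ℝ 2 (Measure.pi μ))
    (hU : ∀ ρ : ∀ j, Fin (r j),
      (U ρ : (∀ j, Ω j) → ℝ)
        =ᵐ[Measure.pi μ] fun z => ∏ j, (u j (ρ j) : Ω j → ℝ) (z j)) :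
    A = ∑ ρ : ∀ j, Fin (r j),
        (∫ z, A z * ∏ j, (u j (ρ j) : Ω j → ℝ) (z j) ∂(Measure.pi μ)) • U ρ := by
  classical
  set c : (∀ j, Fin (r j)) → ℝ := fun ρ => T μ A (fun j => u j (ρ j)) with hc
  have hcint : ∀ ρ, c ρ = ∫ z, A z * ∏ j, (u j (ρ j) : Ω j → ℝ) (z j) ∂(Measure.pi μ) :=
    fun ρ => T_apply μ A _
  set S : Lp ℝ 2 (Measure.pi μ) := ∑ ρ, c ρ • U ρ with hS
  have hUP : ∀ ρ, U ρ = P μ (fun j => u j (ρ j)) := fun ρ =>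
    Lp.ext ((hU ρ).trans (coeFn_P μ _).symm)
  have hdelta : ∀ (j : Fin d) (ρ ρ' : Fin (r j)),
      ⟪u j ρ, u j ρ'⟫ = if ρ = ρ' then (1:ℝ) else 0 :=
    fun j => orthonormal_iff_ite.1 (hON j)
  have hTS : ∀ w : ∀ j, Lp ℝ 2 (μ j),
      T μ S w = ∑ ρ, c ρ * ∏ j, ⟪u j (ρ j), w j⟫ := by
    intro w
    rw [T_eq_inner, hS, sum_inner]
    refine Finset.sum_congr rfl fun ρ _ => ?_
    rw [real_inner_smul_left, hUP ρ, inner_P_P]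
  have hmain : ∀ w : ∀ j, Lp ℝ 2 (μ j), T μ A w = T μ S w := by
    intro w
    set p : ∀ j, Lp ℝ 2 (μ j) := fun j => ∑ ρ, ⟪u j ρ, w j⟫ • u j ρ with hp
    set q : ∀ j, Lp ℝ 2 (μ j) := fun j => w j - p j with hq
    have hqorth : ∀ (j : Fin d) (ρ : Fin (r j)), ⟪u j ρ, q j⟫ = 0 := by
      intro j ρ
      rw [hq]
      simp only [hp, inner_sub_right, inner_sum, real_inner_smul_right, hdelta j,
        mul_ite, mul_one, mul_zero, Finset.sum_ite_eq, Finset.mem_univ, if_true, sub_self]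
    have hw : w = p + q := by
      funext j
      simp [hq]
    have hAq : ∀ (w' : ∀ j', Lp ℝ 2 (μ j')) (j : Fin d), w' j = q j → T μ A w' = 0 := by
      intro w' j hj
      rw [T_apply]
      exact hrange j (q j) (hqorth j) w' hj
    have hSq : ∀ (w' : ∀ j', Lp ℝ 2 (μ j')) (j : Fin d), w' j = q j → T μ S w' = 0 := by
      intro w' j hj
      rw [hTS]
      refine Finset.sum_eq_zero fun ρ _ => ?_
      have h0 : ⟪u j (ρ j), w' j⟫ = 0 := by rw [hj]; exact hqorth j (ρ j)
      rw [Finset.prod_eq_zero (Finset.mem_univ j) h0, mul_zero]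
    have hTu : ∀ ρ : ∀ j, Fin (r j),
        T μ A (fun j => u j (ρ j)) = T μ S (fun j => u j (ρ j)) := by
      intro ρ
      rw [hTS]
      have hprod : ∀ ρ' : ∀ j, Fin (r j),
          (∏ j, ⟪u j (ρ' j), u j (ρ j)⟫) = if ρ' = ρ then (1:ℝ) else 0 := by
        intro ρ'
        by_cases h : ρ' = ρ
        · subst h
          simp [hdelta, fun j i => (hON j).1 i]
        · obtain ⟨j, hj⟩ : ∃ j, ρ' j ≠ ρ j := by
            by_contra hcon
            push_neg at hcon
            exact h (funext hcon)
          rw [if_neg h]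
          exact Finset.prod_eq_zero (Finset.mem_univ j) (by rw [hdelta]; exact if_neg hj)
      simp only [hprod, mul_ite, mul_one, mul_zero, Finset.sum_ite_eq', Finset.mem_univ, if_true]
      rfl
    have hTp : T μ A p = T μ S p := by
      rw [hp, MultilinearMap.map_sum, MultilinearMap.map_sum]
      refine Finset.sum_congr rfl fun ρ _ => ?_
      rw [MultilinearMap.map_smul_univ, MultilinearMap.map_smul_univ, hTu ρ]
    calc T μ A w = ∑ s : Finset (Fin d), T μ A (s.piecewise p q) := by
          rw [hw]; exact MultilinearMap.map_add_univ _ p q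
      _ = ∑ s : Finset (Fin d), T μ S (s.piecewise p q) := by
          refine Finset.sum_congr rfl fun s _ => ?_
          by_cases hsu : s = Finset.univ
          · subst hsu
            rw [Finset.piecewise_univ]
            exact hTp
          · obtain ⟨j, hj⟩ : ∃ j, j ∉ s := by
              by_contra hcon
              push_neg at hcon
              exact hsu (Finset.eq_univ_iff_forall.2 hcon)
            have hpw : s.piecewise p q j = q j := Finset.piecewise_eq_of_notMem _ _ _ hj
            rw [hAq _ j hpw, hSq _ j hpw]
      _ = T μ S w := by rw [hw]; exact (MultilinearMap.map_add_univ _ p q).symm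
  have hAS : A = S := by
    have hzero : A - S = 0 := by
      apply eq_zero_of_inner_P
      intro w
      have h := hmain w
      rw [T_eq_inner, T_eq_inner] at h
      rw [inner_sub_left, h, sub_self]
    rwa [sub_eq_zero] at hzero
  have hgoal : (∑ ρ : ∀ j, Fin (r j),
      (∫ z, A z * ∏ j, (u j (ρ j) : Ω j → ℝ) (z j) ∂(Measure.pi μ)) • U ρ) = S := by
    rw [hS]
    exact Finset.sum_congr rfl fun ρ _ => by rw [hcint ρ]
  rw [hgoal]
  exact hAS
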